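/- Let A > 0, A₂ ≥ A₃ > 0 and d₁⁰ > 0 be reals, set ṽ₁⁰ = (A/4)·(1 + cosh(2d₁⁰)), v₂⁰ = (A₂/2)·exp(−2d₁⁰), v₃⁰ = (A₃/2)·exp(−2d₁⁰), and define V : ℝ → ℝ by V(d₁) = (A/4)·(2d₁ + sinh(2d₁)) + (A₂/2)·exp(−2d₁) + (A₃/2)·exp(2d₁ − 4d₁⁰) for d₁ ≤ d₁⁰, and V(d₁) = (A/4)·(2d₁ + sinh(2d₁)) + (A₂/2)·exp(−2d₁) + (A₃/2)·exp(−2d₁) for d₁ ≥ d₁⁰. Then V has a local maximum at d₁⁰ if and only if the strict triangular inequalities v₂⁰ − v₃⁰ < ṽ₁⁰ < v₂⁰ + v₃⁰ hold. -/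

import Mathlib

private lemma derivF (A A₂ A₃ d₁ d : ℝ) :
    HasDerivAt (fun x => A / 4 * (2 * x + Real.sinh (2 * x)) +
      A₂ / 2 * Real.exp (-2 * x) + A₃ / 2 * Real.exp (2 * x - 4 * d₁))
      (A / 2 * (1 + Real.cosh (2 * d)) - A₂ * Real.exp (-2 * d)
        + A₃ * Real.exp (2 * d - 4 * d₁)) d := by
  have h2x : HasDerivAt (fun x : ℝ => 2 * x) 2 d := by
    simpa using (hasDerivAt_id d).const_mul 2
  have hm2x : HasDerivAt (fun x : ℝ => -2 * x) (-2) d := by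
    simpa using (hasDerivAt_id d).const_mul (-2)
  have h2xk : HasDerivAt (fun x : ℝ => 2 * x - 4 * d₁) 2 d := h2x.sub_const _
  have hs : HasDerivAt (fun x : ℝ => Real.sinh (2 * x)) (Real.cosh (2 * d) * 2) d :=
    (Real.hasDerivAt_sinh (2 * d)).comp d h2x
  have he1 : HasDerivAt (fun x : ℝ => Real.exp (-2 * x)) (Real.exp (-2 * d) * (-2)) d :=
    (Real.hasDerivAt_exp _).comp d hm2x
  have he2 : HasDerivAt (fun x : ℝ => Real.exp (2 * x - 4 * d₁))
      (Real.exp (2 * d - 4 * d₁) * 2) d := (Real.hasDerivAt_exp _).comp d h2xk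
  have := (((h2x.add hs).const_mul (A / 4)).add (he1.const_mul (A₂ / 2))).add
    (he2.const_mul (A₃ / 2))
  convert this using 1
  all_goals first | rfl | ring

private lemma derivF1 (A A₂ A₃ d₁ d : ℝ) :
    HasDerivAt (fun x => A / 2 * (1 + Real.cosh (2 * x)) - A₂ * Real.exp (-2 * x)
      + A₃ * Real.exp (2 * x - 4 * d₁))
      (A * Real.sinh (2 * d) + 2 * A₂ * Real.exp (-2 * d)
        + 2 * A₃ * Real.exp (2 * d - 4 * d₁)) d := by
  have h2x : HasDerivAt (fun x : ℝ => 2 * x) 2 d := by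
    simpa using (hasDerivAt_id d).const_mul 2
  have hm2x : HasDerivAt (fun x : ℝ => -2 * x) (-2) d := by
    simpa using (hasDerivAt_id d).const_mul (-2)
  have h2xk : HasDerivAt (fun x : ℝ => 2 * x - 4 * d₁) 2 d := h2x.sub_const _
  have hc : HasDerivAt (fun x : ℝ => Real.cosh (2 * x)) (Real.sinh (2 * d) * 2) d :=
    (Real.hasDerivAt_cosh (2 * d)).comp d h2x
  have hc' : HasDerivAt (fun x : ℝ => 1 + Real.cosh (2 * x)) (Real.sinh (2 * d) * 2) d :=
    hc.const_add 1
  have he1 : HasDerivAt (fun x : ℝ => Real.exp (-2 * x)) (Real.exp (-2 * d) * (-2)) d :=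
    (Real.hasDerivAt_exp _).comp d hm2x
  have he2 : HasDerivAt (fun x : ℝ => Real.exp (2 * x - 4 * d₁))
      (Real.exp (2 * d - 4 * d₁) * 2) d := (Real.hasDerivAt_exp _).comp d h2xk
  have := ((hc'.const_mul (A / 2)).sub (he1.const_mul A₂)).add (he2.const_mul A₃)
  convert this using 1
  all_goals first | rfl | ring

private lemma derivG (A A₂ A₃ d : ℝ) :
    HasDerivAt (fun x => A / 4 * (2 * x + Real.sinh (2 * x)) +
      A₂ / 2 * Real.exp (-2 * x) + A₃ / 2 * Real.exp (-2 * x))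
      (A / 2 * (1 + Real.cosh (2 * d)) - A₂ * Real.exp (-2 * d)
        - A₃ * Real.exp (-2 * d)) d := by
  have h2x : HasDerivAt (fun x : ℝ => 2 * x) 2 d := by
    simpa using (hasDerivAt_id d).const_mul 2
  have hm2x : HasDerivAt (fun x : ℝ => -2 * x) (-2) d := by
    simpa using (hasDerivAt_id d).const_mul (-2)
  have hs : HasDerivAt (fun x : ℝ => Real.sinh (2 * x)) (Real.cosh (2 * d) * 2) d :=
    (Real.hasDerivAt_sinh (2 * d)).comp d h2x
  have he1 : HasDerivAt (fun x : ℝ => Real.exp (-2 * x)) (Real.exp (-2 * d) * (-2)) d :=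
    (Real.hasDerivAt_exp _).comp d hm2x
  have := (((h2x.add hs).const_mul (A / 4)).add (he1.const_mul (A₂ / 2))).add
    (he1.const_mul (A₃ / 2))
  convert this using 1
  all_goals first | rfl | ring

private lemma derivG1 (A A₂ A₃ d : ℝ) :
    HasDerivAt (fun x => A / 2 * (1 + Real.cosh (2 * x)) - A₂ * Real.exp (-2 * x)
      - A₃ * Real.exp (-2 * x))
      (A * Real.sinh (2 * d) + 2 * A₂ * Real.exp (-2 * d)
        + 2 * A₃ * Real.exp (-2 * d)) d := by
  have h2x : HasDerivAt (fun x : ℝ => 2 * x) 2 d := by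
    simpa using (hasDerivAt_id d).const_mul 2
  have hm2x : HasDerivAt (fun x : ℝ => -2 * x) (-2) d := by
    simpa using (hasDerivAt_id d).const_mul (-2)
  have hc : HasDerivAt (fun x : ℝ => Real.cosh (2 * x)) (Real.sinh (2 * d) * 2) d :=
    (Real.hasDerivAt_cosh (2 * d)).comp d h2x
  have hc' : HasDerivAt (fun x : ℝ => 1 + Real.cosh (2 * x)) (Real.sinh (2 * d) * 2) d :=
    hc.const_add 1
  have he1 : HasDerivAt (fun x : ℝ => Real.exp (-2 * x)) (Real.exp (-2 * d) * (-2)) d :=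
    (Real.hasDerivAt_exp _).comp d hm2x
  have := ((hc'.const_mul (A / 2)).sub (he1.const_mul A₂)).sub (he1.const_mul A₃)
  convert this using 1
  all_goals first | rfl | ring

/-- Case II of the main theorem (one boundary component and two cusps): the total
peripheral volume `V` has a local maximum at `d₁⁰` iff the strict triangular
inequalities `v₂⁰ − v₃⁰ < vt₁⁰ < v₂⁰ + v₃⁰` hold. -/
theorem caseII_localMax_iff_triangular (A A₂ A₃ d₁ vt₁ v₂ v₃ : ℝ)
    (hA : 0 < A) (hA₃ : 0 < A₃) (hA₂₃ : A₃ ≤ A₂) (hd₁ : 0 < d₁)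
    (hvt₁ : vt₁ = A / 4 * (1 + Real.cosh (2 * d₁)))
    (hv₂ : v₂ = A₂ / 2 * Real.exp (-2 * d₁))
    (hv₃ : v₃ = A₃ / 2 * Real.exp (-2 * d₁))
    (V : ℝ → ℝ)
    (hVle : ∀ d ≤ d₁, V d = A / 4 * (2 * d + Real.sinh (2 * d)) +
      A₂ / 2 * Real.exp (-2 * d) + A₃ / 2 * Real.exp (2 * d - 4 * d₁))
    (hVge : ∀ d ≥ d₁, V d = A / 4 * (2 * d + Real.sinh (2 * d)) +
      A₂ / 2 * Real.exp (-2 * d) + A₃ / 2 * Real.exp (-2 * d)) :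
    IsLocalMax V d₁ ↔ (v₂ - v₃ < vt₁ ∧ vt₁ < v₂ + v₃) := by
  have hA₂ : 0 < A₂ := lt_of_lt_of_le hA₃ hA₂₃
  set f : ℝ → ℝ := fun x => A / 4 * (2 * x + Real.sinh (2 * x)) +
      A₂ / 2 * Real.exp (-2 * x) + A₃ / 2 * Real.exp (2 * x - 4 * d₁) with hfdef
  set g : ℝ → ℝ := fun x => A / 4 * (2 * x + Real.sinh (2 * x)) +
      A₂ / 2 * Real.exp (-2 * x) + A₃ / 2 * Real.exp (-2 * x) with hgdef
  set f1 : ℝ → ℝ := fun x => A / 2 * (1 + Real.cosh (2 * x)) - A₂ * Real.exp (-2 * x)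
      + A₃ * Real.exp (2 * x - 4 * d₁) with hf1def
  set g1 : ℝ → ℝ := fun x => A / 2 * (1 + Real.cosh (2 * x)) - A₂ * Real.exp (-2 * x)
      - A₃ * Real.exp (-2 * x) with hg1def
  have hf : ∀ d, HasDerivAt f (f1 d) d := fun d => derivF A A₂ A₃ d₁ d
  have hg : ∀ d, HasDerivAt g (g1 d) d := fun d => derivG A A₂ A₃ d
  have hf1 : ∀ d, HasDerivAt f1
      (A * Real.sinh (2 * d) + 2 * A₂ * Real.exp (-2 * d)
        + 2 * A₃ * Real.exp (2 * d - 4 * d₁)) d := fun d => derivF1 A A₂ A₃ d₁ d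
  have hg1 : ∀ d, HasDerivAt g1
      (A * Real.sinh (2 * d) + 2 * A₂ * Real.exp (-2 * d)
        + 2 * A₃ * Real.exp (-2 * d)) d := fun d => derivG1 A A₂ A₃ d
  -- strict monotonicity of the one-sided derivative functions on [0, ∞)
  have hf1mono : StrictMonoOn f1 (Set.Ici (0 : ℝ)) := by
    apply strictMonoOn_of_deriv_pos (convex_Ici 0)
      (fun x _ => (hf1 x).continuousAt.continuousWithinAt)
    intro x hx
    rw [interior_Ici] at hx
    rw [(hf1 x).deriv]
    have hs : 0 < Real.sinh (2 * x) := Real.sinh_pos_iff.2 (by have := Set.mem_Ioi.1 hx; linarith)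
    have e1 := Real.exp_pos (-2 * x)
    have e2 := Real.exp_pos (2 * x - 4 * d₁)
    nlinarith [mul_pos hA hs, mul_pos hA₂ e1, mul_pos hA₃ e2]
  have hg1mono : StrictMonoOn g1 (Set.Ici (0 : ℝ)) := by
    apply strictMonoOn_of_deriv_pos (convex_Ici 0)
      (fun x _ => (hg1 x).continuousAt.continuousWithinAt)
    intro x hx
    rw [interior_Ici] at hx
    rw [(hg1 x).deriv]
    have hs : 0 < Real.sinh (2 * x) := Real.sinh_pos_iff.2 (by have := Set.mem_Ioi.1 hx; linarith)
    have e1 := Real.exp_pos (-2 * x)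
    nlinarith [mul_pos hA hs, mul_pos hA₂ e1, mul_pos hA₃ e1]
  -- values at d₁
  have hexp : Real.exp (2 * d₁ - 4 * d₁) = Real.exp (-2 * d₁) := by congr 1; ring
  have hf1d : f1 d₁ = 2 * (vt₁ - v₂ + v₃) := by
    rw [hf1def]; simp only; rw [hexp, hvt₁, hv₂, hv₃]; ring
  have hg1d : g1 d₁ = 2 * (vt₁ - v₂ - v₃) := by
    rw [hg1def]; simp only; rw [hvt₁, hv₂, hv₃]; ring
  constructor
  · intro h
    constructor
    · by_contra hc
      push_neg at hc
      have hle : f1 d₁ ≤ 0 := by rw [hf1d]; linarith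
      have hanti : StrictAntiOn f (Set.Icc (d₁ / 2) d₁) := by
        apply strictAntiOn_of_deriv_neg (convex_Icc _ _)
          (fun x _ => (hf x).continuousAt.continuousWithinAt)
        intro x hx
        rw [interior_Icc] at hx
        rw [(hf x).deriv]
        have : f1 x < f1 d₁ :=
          hf1mono (Set.mem_Ici.2 (by linarith [hx.1])) (Set.mem_Ici.2 hd₁.le) hx.2
        linarith
      have hgt : ∀ x ∈ Set.Ioo (d₁ / 2) d₁, V d₁ < V x := by
        intro x hx
        rw [hVle x hx.2.le, hVle d₁ le_rfl]
        exact hanti ⟨hx.1.le, hx.2.le⟩ ⟨by linarith, le_rfl⟩ hx.2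
      have hmem : Set.Ioo (d₁ / 2) d₁ ∈ nhdsWithin d₁ (Set.Iio d₁) :=
        Ioo_mem_nhdsLT_of_mem ⟨by linarith, le_rfl⟩
      have := ((h.filter_mono nhdsWithin_le_nhds).and
        (Filter.eventually_of_mem hmem (fun x hx => hx))).exists
      obtain ⟨x, hx1, hx2⟩ := this
      exact absurd hx1 (not_le.2 (hgt x hx2))
    · by_contra hc
      push_neg at hc
      have hge : 0 ≤ g1 d₁ := by rw [hg1d]; linarith
      have hmono : StrictMonoOn g (Set.Icc d₁ (d₁ + 1)) := by
        apply strictMonoOn_of_deriv_pos (convex_Icc _ _)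
          (fun x _ => (hg x).continuousAt.continuousWithinAt)
        intro x hx
        rw [interior_Icc] at hx
        rw [(hg x).deriv]
        have : g1 d₁ < g1 x :=
          hg1mono (Set.mem_Ici.2 hd₁.le) (Set.mem_Ici.2 (by linarith [hx.1])) hx.1
        linarith
      have hgt : ∀ x ∈ Set.Ioo d₁ (d₁ + 1), V d₁ < V x := by
        intro x hx
        rw [hVge x hx.1.le, hVge d₁ le_rfl]
        exact hmono ⟨le_rfl, by linarith⟩ ⟨hx.1.le, hx.2.le⟩ hx.1
      have hmem : Set.Ioo d₁ (d₁ + 1) ∈ nhdsWithin d₁ (Set.Ioi d₁) :=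
        Ioo_mem_nhdsGT_of_mem ⟨le_rfl, by linarith⟩
      have := ((h.filter_mono nhdsWithin_le_nhds).and
        (Filter.eventually_of_mem hmem (fun x hx => hx))).exists
      obtain ⟨x, hx1, hx2⟩ := this
      exact absurd hx1 (not_le.2 (hgt x hx2))
  · rintro ⟨h1, h2⟩
    have hf1pos : 0 < f1 d₁ := by rw [hf1d]; linarith
    have hg1neg : g1 d₁ < 0 := by rw [hg1d]; linarith
    have hev : ∀ᶠ x in nhds d₁, 0 < f1 x ∧ g1 x < 0 :=
      ((hf1 d₁).continuousAt.eventually (eventually_gt_nhds hf1pos)).and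
        ((hg1 d₁).continuousAt.eventually (eventually_lt_nhds hg1neg))
    obtain ⟨ε, hε, hball⟩ := Metric.eventually_nhds_iff.1 hev
    have hmonoF : MonotoneOn f (Set.Icc (d₁ - ε / 2) d₁) := by
      apply StrictMonoOn.monotoneOn
      apply strictMonoOn_of_deriv_pos (convex_Icc _ _)
        (fun x _ => (hf x).continuousAt.continuousWithinAt)
      intro x hx
      rw [interior_Icc] at hx
      rw [(hf x).deriv]
      have : dist x d₁ < ε := by
        rw [Real.dist_eq, abs_sub_lt_iff]
        constructor <;> [linarith [hx.2]; linarith [hx.1]]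
      exact (hball this).1
    have hantiG : AntitoneOn g (Set.Icc d₁ (d₁ + ε / 2)) := by
      apply StrictAntiOn.antitoneOn
      apply strictAntiOn_of_deriv_neg (convex_Icc _ _)
        (fun x _ => (hg x).continuousAt.continuousWithinAt)
      intro x hx
      rw [interior_Icc] at hx
      rw [(hg x).deriv]
      have : dist x d₁ < ε := by
        rw [Real.dist_eq, abs_sub_lt_iff]
        constructor <;> [linarith [hx.2]; linarith [hx.1]]
      exact (hball this).2
    have hmem : Set.Ioo (d₁ - ε / 2) (d₁ + ε / 2) ∈ nhds d₁ :=
      Ioo_mem_nhds (by linarith) (by linarith)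
    refine Filter.eventually_of_mem hmem (fun x hx => ?_)
    rcases le_total x d₁ with hxd | hxd
    · rw [hVle x hxd, hVle d₁ le_rfl]
      exact hmonoF ⟨hx.1.le, hxd⟩ ⟨by linarith, le_rfl⟩ hxd
    · rw [hVge x hxd, hVge d₁ le_rfl]
      exact hantiG ⟨le_rfl, by linarith⟩ ⟨hxd, hx.2.le⟩ hxd
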